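/- If V is a set of 2n points in the closed unit ball of ℝⁿ (n ≥ 2) with all pairwise distances ≥ √2, then V = {±e₁,...,±eₙ} for some orthonormal basis e₁,...,eₙ of ℝⁿ. -/

import Mathlib

open Module Finset

private lemma mul_nonneg_of_nonpos_nonpos {a b : ℝ} (ha : a ≤ 0) (hb : b ≤ 0) : 0 ≤ a * b := by
  nlinarith
open scoped RealInnerProductSpace

private lemma proj_mem {E : Type*} [NormedAddCommGroup E] [InnerProductSpace ℝ E] (v u : E) :
    u - (⟪v, u⟫ / ‖v‖ ^ 2) • v ∈ (ℝ ∙ v)ᗮ := by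
  rw [Submodule.mem_orthogonal_singleton_iff_inner_right]
  rcases eq_or_ne v 0 with rfl | hv
  · simp
  · have h : ‖v‖ ^ 2 ≠ 0 := pow_ne_zero 2 (norm_ne_zero_iff.mpr hv)
    rw [inner_sub_right, real_inner_smul_right, real_inner_self_eq_norm_sq]
    field_simp
    ring

private lemma proj_inner {E : Type*} [NormedAddCommGroup E] [InnerProductSpace ℝ E] {v : E}
    (hv : v ≠ 0) (u w : E) :
    ⟪u - (⟪v, u⟫ / ‖v‖ ^ 2) • v, w - (⟪v, w⟫ / ‖v‖ ^ 2) • v⟫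
      = ⟪u, w⟫ - (⟪v, u⟫ / ‖v‖ ^ 2) * (⟪v, w⟫ / ‖v‖ ^ 2) * ‖v‖ ^ 2 := by
  have h : ‖v‖ ^ 2 ≠ 0 := pow_ne_zero 2 (norm_ne_zero_iff.mpr hv)
  rw [inner_sub_left, inner_sub_right, inner_sub_right, real_inner_smul_left,
    real_inner_smul_left, real_inner_smul_right, real_inner_smul_right,
    real_inner_self_eq_norm_sq, real_inner_comm v u]
  field_simp
  ring

private lemma boundB (n : ℕ) :
    ∀ (E : Type*) [NormedAddCommGroup E] [InnerProductSpace ℝ E] [FiniteDimensional ℝ E],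
    finrank ℝ E = n → ∀ V : Finset E, (0:E) ∉ V →
    (∀ u ∈ V, ∀ v ∈ V, u ≠ v → ⟪u, v⟫ ≤ 0) → V.card ≤ 2 * n := by
  induction n with
  | zero =>
    intro E _ _ _ hr V h0 _
    have hss : Subsingleton E := finrank_zero_iff.mp hr
    have : V = ∅ := Finset.eq_empty_iff_forall_notMem.mpr fun v hv =>
      h0 (by rwa [Subsingleton.elim (0:E) v])
    simp [this]
  | succ n ih =>
    intro E _ _ _ hr V h0 hneg
    classical
    rcases V.eq_empty_or_nonempty with rfl | ⟨v₁, hv₁⟩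
    · simp
    have hv₁0 : v₁ ≠ 0 := fun h => h0 (h ▸ hv₁)
    have hn2 : ‖v₁‖ ^ 2 ≠ 0 := pow_ne_zero 2 (norm_ne_zero_iff.mpr hv₁0)
    set c : E → ℝ := fun u => ⟪v₁, u⟫ / ‖v₁‖ ^ 2 with hc
    set f : E → E := fun u => u - c u • v₁ with hf
    set F := (ℝ ∙ v₁)ᗮ with hF
    have hFrank : finrank ℝ F = n := by
      have h1 : finrank ℝ (ℝ ∙ v₁) + finrank ℝ F = finrank ℝ E :=
        Submodule.finrank_add_finrank_orthogonal _
      rw [finrank_span_singleton hv₁0, hr] at h1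
      omega
    set g : E → F := fun u => ⟨f u, proj_mem v₁ u⟩ with hg
    have hcneg : ∀ u ∈ V, u ≠ v₁ → c u ≤ 0 := fun u hu hne =>
      div_nonpos_of_nonpos_of_nonneg (hneg v₁ hv₁ u hu (Ne.symm hne)) (sq_nonneg _)
    have hkey : ∀ u w : E, ⟪f u, f w⟫ = ⟪u, w⟫ - c u * c w * ‖v₁‖ ^ 2 :=
      fun u w => proj_inner hv₁0 u w
    set V' := V.erase v₁ with hV'
    set Z := V'.filter (fun u => f u = 0) with hZ
    set N := V'.filter (fun u => f u ≠ 0) with hN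
    have hmemV' : ∀ u ∈ V', u ∈ V ∧ u ≠ v₁ := fun u hu =>
      ⟨Finset.mem_of_mem_erase hu, Finset.ne_of_mem_erase hu⟩
    have hZcard : Z.card ≤ 1 := by
      apply Finset.card_le_one.mpr
      intro a ha b hb
      by_contra hab
      rw [Finset.mem_filter] at ha hb
      obtain ⟨haV, hane⟩ := hmemV' a ha.1
      obtain ⟨hbV, hbne⟩ := hmemV' b hb.1
      have hae : a = c a • v₁ := by have := ha.2; rw [hf] at this; simpa [sub_eq_zero] using this
      have hbe : b = c b • v₁ := by have := hb.2; rw [hf] at this; simpa [sub_eq_zero] using this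
      have hca : c a < 0 := (hcneg a haV hane).lt_of_ne (fun h => by
        have ha0 : a = 0 := by rw [hae, h, zero_smul]
        exact h0 (ha0 ▸ haV))
      have hcb : c b < 0 := (hcneg b hbV hbne).lt_of_ne (fun h => by
        have hb0 : b = 0 := by rw [hbe, h, zero_smul]
        exact h0 (hb0 ▸ hbV))
      have : ⟪a, b⟫ = c a * c b * ‖v₁‖ ^ 2 := by
        conv_lhs => rw [hae, hbe]
        rw [real_inner_smul_left, real_inner_smul_right, real_inner_self_eq_norm_sq]
        ring
      have hpos : (0:ℝ) < ⟪a, b⟫ := by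
        rw [this]
        exact mul_pos (mul_pos_of_neg_of_neg hca hcb) (pow_pos (norm_pos_iff.mpr hv₁0) 2)
      exact absurd (hneg a haV b hbV hab) (not_le.mpr hpos)
    have hNinj : Set.InjOn g N := by
      intro u hu w hw hgw
      by_contra huw
      obtain ⟨huV', hfu⟩ := Finset.mem_filter.mp (Finset.mem_coe.mp hu)
      obtain ⟨hwV', hfw⟩ := Finset.mem_filter.mp (Finset.mem_coe.mp hw)
      obtain ⟨huV, hune⟩ := hmemV' u huV'
      obtain ⟨hwV, hwne⟩ := hmemV' w hwV'
      have hfuw : f u = f w := congrArg Subtype.val hgw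
      have h1 : ⟪u, w⟫ = ‖f u‖ ^ 2 + c u * c w * ‖v₁‖ ^ 2 := by
        have := hkey u w
        rw [← hfuw, real_inner_self_eq_norm_sq] at this
        linarith
      have h2 : (0:ℝ) < ‖f u‖ ^ 2 := pow_pos (norm_pos_iff.mpr hfu) 2
      have h3 : (0:ℝ) ≤ c u * c w * ‖v₁‖ ^ 2 := by
        have h4 := hcneg u huV hune
        have h5 := hcneg w hwV hwne
        exact mul_nonneg (mul_nonneg_of_nonpos_nonpos h4 h5) (sq_nonneg _)
      exact absurd (hneg u huV w hwV huw) (not_le.mpr (by rw [h1]; linarith))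
    have hNcard : N.card ≤ 2 * n := by
      have h0' : (0:F) ∉ N.image g := by
        intro hmem
        obtain ⟨u, hu, hgu⟩ := Finset.mem_image.mp hmem
        exact (Finset.mem_filter.mp hu).2 (by simpa [hg, Subtype.ext_iff] using hgu)
      have hneg' : ∀ x ∈ N.image g, ∀ y ∈ N.image g, x ≠ y → ⟪x, y⟫ ≤ 0 := by
        intro x hx y hy hxy
        obtain ⟨u, hu, rfl⟩ := Finset.mem_image.mp hx
        obtain ⟨w, hw, rfl⟩ := Finset.mem_image.mp hy
        have huw : u ≠ w := fun h => hxy (by rw [h])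
        obtain ⟨huV, hune⟩ := hmemV' u (Finset.mem_filter.mp hu).1
        obtain ⟨hwV, hwne⟩ := hmemV' w (Finset.mem_filter.mp hw).1
        have : ⟪g u, g w⟫ = ⟪f u, f w⟫ := rfl
        rw [this, hkey]
        have h3 : (0:ℝ) ≤ c u * c w * ‖v₁‖ ^ 2 := by
          have h4 := hcneg u huV hune
          have h5 := hcneg w hwV hwne
          exact mul_nonneg (mul_nonneg_of_nonpos_nonpos h4 h5) (sq_nonneg _)
        have := hneg u huV w hwV huw
        linarith
      have := ih F hFrank (N.image g) h0' hneg'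
      rwa [Finset.card_image_of_injOn hNinj] at this
    have hpart : Z.card + N.card = V'.card := by
      rw [hZ, hN]
      exact Finset.card_filter_add_card_filter_not _
    have hV'card : V'.card = V.card - 1 := Finset.card_erase_of_mem hv₁
    have hVpos : 1 ≤ V.card := Finset.card_pos.mpr ⟨v₁, hv₁⟩
    omega

private lemma structL (n : ℕ) :
    ∀ (E : Type*) [NormedAddCommGroup E] [InnerProductSpace ℝ E] [FiniteDimensional ℝ E],
    finrank ℝ E = n → ∀ V : Finset E, V.card = 2 * n → (0:E) ∉ V →
    (∀ u ∈ V, ∀ v ∈ V, u ≠ v → ⟪u, v⟫ ≤ 0) →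
    ∀ u ∈ V, ∀ v ∈ V, u ≠ v → ⟪u, v⟫ = 0 ∨ ∃ c : ℝ, c < 0 ∧ v = c • u := by
  induction n with
  | zero =>
    intro E _ _ _ _ V hcard _ _ u hu
    exact absurd (Finset.card_pos.mpr ⟨u, hu⟩) (by omega)
  | succ n ih =>
    intro E _ _ _ hr V hcard h0 hneg
    classical
    obtain ⟨v₁, hv₁⟩ : V.Nonempty := Finset.card_pos.mp (by omega)
    have hv₁0 : v₁ ≠ 0 := fun h => h0 (h ▸ hv₁)
    have hn2 : ‖v₁‖ ^ 2 ≠ 0 := pow_ne_zero 2 (norm_ne_zero_iff.mpr hv₁0)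
    have hn2' : (0:ℝ) < ‖v₁‖ ^ 2 := pow_pos (norm_pos_iff.mpr hv₁0) 2
    set c : E → ℝ := fun u => ⟪v₁, u⟫ / ‖v₁‖ ^ 2 with hc
    set f : E → E := fun u => u - c u • v₁ with hf
    set F := (ℝ ∙ v₁)ᗮ with hF
    have hFrank : finrank ℝ F = n := by
      have h1 : finrank ℝ (ℝ ∙ v₁) + finrank ℝ F = finrank ℝ E :=
        Submodule.finrank_add_finrank_orthogonal _
      rw [finrank_span_singleton hv₁0, hr] at h1
      omega
    set g : E → F := fun u => ⟨f u, proj_mem v₁ u⟩ with hg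
    have hcneg : ∀ u ∈ V, u ≠ v₁ → c u ≤ 0 := fun u hu hne =>
      div_nonpos_of_nonpos_of_nonneg (hneg v₁ hv₁ u hu (Ne.symm hne)) (sq_nonneg _)
    have hkey : ∀ u w : E, ⟪f u, f w⟫ = ⟪u, w⟫ - c u * c w * ‖v₁‖ ^ 2 :=
      fun u w => proj_inner hv₁0 u w
    set V' := V.erase v₁ with hV'
    set Z := V'.filter (fun u => f u = 0) with hZ
    set N := V'.filter (fun u => f u ≠ 0) with hN
    have hmemV' : ∀ u ∈ V', u ∈ V ∧ u ≠ v₁ := fun u hu =>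
      ⟨Finset.mem_of_mem_erase hu, Finset.ne_of_mem_erase hu⟩
    -- Z has at most one element
    have hZcard : Z.card ≤ 1 := by
      apply Finset.card_le_one.mpr
      intro a ha b hb
      by_contra hab
      rw [Finset.mem_filter] at ha hb
      obtain ⟨haV, hane⟩ := hmemV' a ha.1
      obtain ⟨hbV, hbne⟩ := hmemV' b hb.1
      have hae : a = c a • v₁ := by have := ha.2; rw [hf] at this; simpa [sub_eq_zero] using this
      have hbe : b = c b • v₁ := by have := hb.2; rw [hf] at this; simpa [sub_eq_zero] using this
      have hca : c a < 0 := (hcneg a haV hane).lt_of_ne (fun h => by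
        have ha0 : a = 0 := by rw [hae, h, zero_smul]
        exact h0 (ha0 ▸ haV))
      have hcb : c b < 0 := (hcneg b hbV hbne).lt_of_ne (fun h => by
        have hb0 : b = 0 := by rw [hbe, h, zero_smul]
        exact h0 (hb0 ▸ hbV))
      have h1 : ⟪a, b⟫ = c a * c b * ‖v₁‖ ^ 2 := by
        conv_lhs => rw [hae, hbe]
        rw [real_inner_smul_left, real_inner_smul_right, real_inner_self_eq_norm_sq]
        ring
      have hpos : (0:ℝ) < ⟪a, b⟫ := by
        rw [h1]
        exact mul_pos (mul_pos_of_neg_of_neg hca hcb) hn2'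
      exact absurd (hneg a haV b hbV hab) (not_le.mpr hpos)
    -- the projection map is injective on N
    have hNinj : Set.InjOn g N := by
      intro u hu w hw hgw
      by_contra huw
      obtain ⟨huV', hfu⟩ := Finset.mem_filter.mp (Finset.mem_coe.mp hu)
      obtain ⟨hwV', hfw⟩ := Finset.mem_filter.mp (Finset.mem_coe.mp hw)
      obtain ⟨huV, hune⟩ := hmemV' u huV'
      obtain ⟨hwV, hwne⟩ := hmemV' w hwV'
      have hfuw : f u = f w := congrArg Subtype.val hgw
      have h1 : ⟪u, w⟫ = ‖f u‖ ^ 2 + c u * c w * ‖v₁‖ ^ 2 := by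
        have := hkey u w
        rw [← hfuw, real_inner_self_eq_norm_sq] at this
        linarith
      have h2 : (0:ℝ) < ‖f u‖ ^ 2 := pow_pos (norm_pos_iff.mpr hfu) 2
      have h3 : (0:ℝ) ≤ c u * c w * ‖v₁‖ ^ 2 :=
        mul_nonneg (mul_nonneg_of_nonpos_nonpos (hcneg u huV hune) (hcneg w hwV hwne))
          (sq_nonneg _)
      exact absurd (hneg u huV w hwV huw) (not_le.mpr (by rw [h1]; linarith))
    have h0' : (0:F) ∉ N.image g := by
      intro hmem
      obtain ⟨u, hu, hgu⟩ := Finset.mem_image.mp hmem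
      exact (Finset.mem_filter.mp hu).2 (by simpa [hg, Subtype.ext_iff] using hgu)
    have hneg' : ∀ x ∈ N.image g, ∀ y ∈ N.image g, x ≠ y → ⟪x, y⟫ ≤ 0 := by
      intro x hx y hy hxy
      obtain ⟨u, hu, rfl⟩ := Finset.mem_image.mp hx
      obtain ⟨w, hw, rfl⟩ := Finset.mem_image.mp hy
      have huw : u ≠ w := fun h => hxy (by rw [h])
      obtain ⟨huV, hune⟩ := hmemV' u (Finset.mem_filter.mp hu).1
      obtain ⟨hwV, hwne⟩ := hmemV' w (Finset.mem_filter.mp hw).1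
      have heq : ⟪g u, g w⟫ = ⟪f u, f w⟫ := rfl
      rw [heq, hkey]
      have h3 : (0:ℝ) ≤ c u * c w * ‖v₁‖ ^ 2 :=
        mul_nonneg (mul_nonneg_of_nonpos_nonpos (hcneg u huV hune) (hcneg w hwV hwne))
          (sq_nonneg _)
      have := hneg u huV w hwV huw
      linarith
    have hNbound : N.card ≤ 2 * n := by
      have := boundB n F hFrank (N.image g) h0' hneg'
      rwa [Finset.card_image_of_injOn hNinj] at this
    have hpart : Z.card + N.card = V'.card := by
      rw [hZ, hN]
      exact Finset.card_filter_add_card_filter_not _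
    have hV'card : V'.card = 2 * n + 1 := by
      rw [hV', Finset.card_erase_of_mem hv₁, hcard]; omega
    have hZone : Z.card = 1 := by omega
    have hNcard : N.card = 2 * n := by omega
    obtain ⟨w, hwZ⟩ := Finset.card_eq_one.mp hZone
    have hwmem : w ∈ Z := hwZ ▸ Finset.mem_singleton_self w
    obtain ⟨hwV', hfw0⟩ := Finset.mem_filter.mp hwmem
    obtain ⟨hwV, hwne⟩ := hmemV' w hwV'
    have hwe : w = c w • v₁ := by have := hfw0; rw [hf] at this; simpa [sub_eq_zero] using this
    have hcw : c w < 0 := (hcneg w hwV hwne).lt_of_ne (fun h => by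
      have hw0 : w = 0 := by rw [hwe, h, zero_smul]
      exact h0 (hw0 ▸ hwV))
    -- every element of N is orthogonal to v₁
    have hNorth : ∀ u ∈ N, ⟪v₁, u⟫ = 0 := by
      intro u hu
      obtain ⟨huV', hfu⟩ := Finset.mem_filter.mp hu
      obtain ⟨huV, hune⟩ := hmemV' u huV'
      have hwu : w ≠ u := fun h => hfu (h ▸ hfw0)
      have h1 : ⟪w, u⟫ = c w * ⟪v₁, u⟫ := by
        conv_lhs => rw [hwe]
        rw [real_inner_smul_left]
      have h2 : ⟪w, u⟫ ≤ 0 := hneg w hwV u huV hwu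
      have h3 : ⟪v₁, u⟫ ≤ 0 := hneg v₁ hv₁ u huV (fun h => hune h.symm)
      nlinarith
    have hNc0 : ∀ u ∈ N, c u = 0 := by
      intro u hu
      rw [hc]
      simp [hNorth u hu]
    have hNfid : ∀ u ∈ N, f u = u := by
      intro u hu
      rw [hf]
      simp [hNc0 u hu]
    -- apply the inductive hypothesis inside F
    have hcard' : (N.image g).card = 2 * n := by
      rw [Finset.card_image_of_injOn hNinj, hNcard]
    have hrelN := ih F hFrank (N.image g) hcard' h0' hneg'
    -- relation within N
    have hrelNE : ∀ u ∈ N, ∀ v ∈ N, u ≠ v → ⟪u, v⟫ = 0 ∨ ∃ d : ℝ, d < 0 ∧ v = d • u := by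
      intro u hu v hv huv
      have hgune : g u ≠ g v := fun h => huv (hNinj hu hv h)
      rcases hrelN (g u) (Finset.mem_image_of_mem g hu) (g v) (Finset.mem_image_of_mem g hv)
        hgune with h | ⟨d, hd, hdv⟩
      · left
        have : ⟪g u, g v⟫ = ⟪f u, f v⟫ := rfl
        rwa [this, hNfid u hu, hNfid v hv] at h
      · right
        refine ⟨d, hd, ?_⟩
        have h2 : f v = d • f u := by
          have := congrArg Subtype.val hdv
          simpa using this
        rwa [hNfid u hu, hNfid v hv] at h2
    -- decompose membership in V
    have hsplit : ∀ u ∈ V, u = v₁ ∨ u = w ∨ u ∈ N := by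
      intro u hu
      rcases eq_or_ne u v₁ with h | h
      · exact Or.inl h
      have huV' : u ∈ V' := Finset.mem_erase.mpr ⟨h, hu⟩
      by_cases hfu : f u = 0
      · have : u ∈ Z := Finset.mem_filter.mpr ⟨huV', hfu⟩
        rw [hwZ] at this
        exact Or.inr (Or.inl (Finset.mem_singleton.mp this))
      · exact Or.inr (Or.inr (Finset.mem_filter.mpr ⟨huV', hfu⟩))
    -- conclude
    have horthw : ∀ x ∈ N, ⟪w, x⟫ = 0 := by
      intro x hx
      have h1 : ⟪w, x⟫ = c w * ⟪v₁, x⟫ := by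
        conv_lhs => rw [hwe]
        rw [real_inner_smul_left]
      rw [h1, hNorth x hx, mul_zero]
    have hv₁w : ∃ d : ℝ, d < 0 ∧ w = d • v₁ := ⟨c w, hcw, hwe⟩
    have hwv₁ : ∃ d : ℝ, d < 0 ∧ v₁ = d • w := by
      refine ⟨(c w)⁻¹, inv_lt_zero.mpr hcw, ?_⟩
      have h2 := congrArg (fun x : E => (c w)⁻¹ • x) hwe
      simp only [smul_smul, inv_mul_cancel₀ (ne_of_lt hcw), one_smul] at h2
      exact h2.symm
    intro p hp q hq hpq
    rcases hsplit p hp with rfl | rfl | hpN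
    · rcases hsplit q hq with rfl | rfl | hqN
      · exact absurd rfl hpq
      · exact Or.inr hv₁w
      · exact Or.inl (hNorth q hqN)
    · rcases hsplit q hq with rfl | rfl | hqN
      · exact Or.inr hwv₁
      · exact absurd rfl hpq
      · exact Or.inl (horthw q hqN)
    · rcases hsplit q hq with rfl | rfl | hqN
      · exact Or.inl (by rw [real_inner_comm]; exact hNorth p hpN)
      · exact Or.inl (by rw [real_inner_comm]; exact horthw p hpN)
      · exact hrelNE p hpN q hqN hpq

theorem cross_polytope_of_pairwise_sqrt_two (n : ℕ) (hn : 2 ≤ n)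
    (V : Finset (EuclideanSpace ℝ (Fin n)))
    (hcard : V.card = 2 * n)
    (hball : ∀ v ∈ V, ‖v‖ ≤ 1)
    (hdist : ∀ u ∈ V, ∀ v ∈ V, u ≠ v → Real.sqrt 2 ≤ dist u v) :
    ∃ b : OrthonormalBasis (Fin n) ℝ (EuclideanSpace ℝ (Fin n)),
      (V : Set (EuclideanSpace ℝ (Fin n))) =
        Set.range (fun i => b i) ∪ Set.range (fun i => -b i) := by
  classical
  have hrankE : finrank ℝ (EuclideanSpace ℝ (Fin n)) = n := finrank_euclideanSpace_fin
  have hsqrt2 : (1:ℝ) < Real.sqrt 2 := by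
    have := Real.sqrt_lt_sqrt (le_refl 0 |>.trans zero_le_one) (by norm_num : (1:ℝ) < 2)
    simpa using this
  -- distance squared
  have hdistsq : ∀ u ∈ V, ∀ v ∈ V, u ≠ v → (2:ℝ) ≤ ‖u - v‖ ^ 2 := by
    intro u hu v hv huv
    have h1 := hdist u hu v hv huv
    have h2 : dist u v = ‖u - v‖ := dist_eq_norm u v
    have h3 : Real.sqrt 2 ^ 2 = 2 := Real.sq_sqrt (by norm_num)
    nlinarith [Real.sqrt_nonneg 2, norm_nonneg (u - v)]
  -- 0 is not in V
  have h0 : (0:EuclideanSpace ℝ (Fin n)) ∉ V := by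
    intro h0mem
    obtain ⟨v, hv, hvne⟩ := Finset.exists_mem_ne (s := V) (by omega) (0:EuclideanSpace ℝ (Fin n))
    have h1 := hdistsq v hv 0 h0mem hvne
    have h2 := hball v hv
    simp only [sub_zero] at h1
    nlinarith [norm_nonneg v]
  -- pairwise inner products are nonpositive
  have hneg : ∀ u ∈ V, ∀ v ∈ V, u ≠ v → ⟪u, v⟫ ≤ 0 := by
    intro u hu v hv huv
    have h1 := hdistsq u hu v hv huv
    rw [norm_sub_sq_real] at h1
    have h2 := hball u hu
    have h3 := hball v hv
    nlinarith [norm_nonneg u, norm_nonneg v]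
  have hrel := structL n (EuclideanSpace ℝ (Fin n)) hrankE V hcard h0 hneg
  -- every element has a "partner" (a negative multiple also in V)
  have hpartner : ∀ u ∈ V, ∃ v ∈ V, ∃ d : ℝ, d < 0 ∧ v = d • u := by
    intro u hu
    by_contra hno
    push_neg at hno
    have hu0 : u ≠ 0 := fun h => h0 (h ▸ hu)
    have horth : ∀ v ∈ V.erase u, ⟪u, v⟫ = 0 := by
      intro v hv
      obtain ⟨hvne, hvV⟩ := Finset.mem_erase.mp hv
      rcases hrel u hu v hvV (Ne.symm hvne) with h | ⟨d, hd, hdv⟩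
      · exact h
      · exact absurd hdv (hno v hvV d hd)
    set F := (ℝ ∙ u)ᗮ with hF
    have hFrank : finrank ℝ F = n - 1 := by
      have h1 : finrank ℝ (ℝ ∙ u) + finrank ℝ F = finrank ℝ (EuclideanSpace ℝ (Fin n)) :=
        Submodule.finrank_add_finrank_orthogonal _
      rw [finrank_span_singleton hu0, hrankE] at h1
      omega
    set g : EuclideanSpace ℝ (Fin n) → F := fun v => ⟨v - (⟪u, v⟫ / ‖u‖ ^ 2) • u, proj_mem u v⟩ with hg
    have hgid : ∀ v ∈ V.erase u, ((g v : EuclideanSpace ℝ (Fin n))) = v := by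
      intro v hv
      simp [hg, horth v hv]
    have hinj : Set.InjOn g (V.erase u) := by
      intro a ha b hb hab
      have := congrArg Subtype.val hab
      rwa [hgid a (Finset.mem_coe.mp ha), hgid b (Finset.mem_coe.mp hb)] at this
    have h0' : (0:F) ∉ (V.erase u).image g := by
      intro hmem
      obtain ⟨v, hv, hgv⟩ := Finset.mem_image.mp hmem
      have h1 : ((g v : EuclideanSpace ℝ (Fin n))) = 0 := by rw [hgv]; rfl
      rw [hgid v hv] at h1
      exact h0 (h1 ▸ Finset.mem_of_mem_erase hv)
    have hneg' : ∀ x ∈ (V.erase u).image g, ∀ y ∈ (V.erase u).image g, x ≠ y → ⟪x, y⟫ ≤ 0 := by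
      intro x hx y hy hxy
      obtain ⟨a, ha, rfl⟩ := Finset.mem_image.mp hx
      obtain ⟨b, hb, rfl⟩ := Finset.mem_image.mp hy
      have hab : a ≠ b := fun h => hxy (by rw [h])
      have h1 : ⟪g a, g b⟫ = ⟪(g a : EuclideanSpace ℝ (Fin n)), (g b : EuclideanSpace ℝ (Fin n))⟫ := rfl
      rw [h1, hgid a ha, hgid b hb]
      exact hneg a (Finset.mem_of_mem_erase ha) b (Finset.mem_of_mem_erase hb) hab
    have hboundapp := boundB (n-1) F hFrank ((V.erase u).image g) h0' hneg'
    rw [Finset.card_image_of_injOn hinj, Finset.card_erase_of_mem hu, hcard] at hboundapp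
    omega
  -- all elements have norm one
  have hnorm : ∀ u ∈ V, ‖u‖ = 1 := by
    intro u hu
    obtain ⟨v, hv, d, hd, hdv⟩ := hpartner u hu
    have hu0 : u ≠ 0 := fun h => h0 (h ▸ hu)
    -- find x in V different from u and v
    have hcard2 : 1 < (V.erase u).card := by
      rw [Finset.card_erase_of_mem hu, hcard]; omega
    obtain ⟨x, hx', hxv⟩ := Finset.exists_mem_ne hcard2 v
    obtain ⟨hxu, hx⟩ := Finset.mem_erase.mp hx'
    -- x is orthogonal to u
    have hux : ⟪u, x⟫ = 0 := by
      rcases hrel u hu x hx (Ne.symm hxu) with h | ⟨d', hd', hdx⟩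
      · exact h
      · exfalso
        have hxv' : x ≠ v := hxv
        have h1 : ⟪x, v⟫ = d' * d * ‖u‖ ^ 2 := by
          conv_lhs => rw [hdx, hdv]
          rw [real_inner_smul_left, real_inner_smul_right, real_inner_self_eq_norm_sq]
          ring
        have hpos : (0:ℝ) < ⟪x, v⟫ := by
          rw [h1]
          exact mul_pos (mul_pos_of_neg_of_neg hd' hd) (pow_pos (norm_pos_iff.mpr hu0) 2)
        exact absurd (hneg x hx v hv hxv') (not_le.mpr hpos)
    have h1 := hdistsq u hu x hx (Ne.symm hxu)
    rw [norm_sub_sq_real, hux] at h1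
    have h2 := hball u hu
    have h3 := hball x hx
    nlinarith [norm_nonneg u, norm_nonneg x]
  -- the partner of each element is its negation, and the relation becomes orthogonal-or-opposite
  have hrel' : ∀ u ∈ V, ∀ v ∈ V, u ≠ v → ⟪u, v⟫ = 0 ∨ v = -u := by
    intro u hu v hv huv
    rcases hrel u hu v hv huv with h | ⟨d, hd, hdv⟩
    · exact Or.inl h
    · right
      have h1 : ‖v‖ = |d| * ‖u‖ := by rw [hdv, norm_smul]; rfl
      rw [hnorm u hu, hnorm v hv, mul_one, abs_of_neg hd] at h1
      have hd1 : d = -1 := by linarith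
      rw [hdv, hd1, neg_one_smul]
  have hnegmem : ∀ u ∈ V, -u ∈ V := by
    intro u hu
    obtain ⟨v, hv, d, hd, hdv⟩ := hpartner u hu
    have h1 : ‖v‖ = |d| * ‖u‖ := by rw [hdv, norm_smul]; rfl
    rw [hnorm u hu, hnorm v hv, mul_one, abs_of_neg hd] at h1
    have hd1 : d = -1 := by linarith
    rw [hdv, hd1, neg_one_smul] at hv
    exact hv
  -- choose one representative from each antipodal pair
  set L := V.toList with hL
  have hmemL : ∀ v : EuclideanSpace ℝ (Fin n), v ∈ L ↔ v ∈ V := fun v => Finset.mem_toList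
  set s := V.filter (fun v => L.idxOf v < L.idxOf (-v)) with hs
  have hvne : ∀ v ∈ V, v ≠ -v := by
    intro v hv h
    have h2 : (2:ℝ) • v = 0 := by
      rw [two_smul]
      nth_rewrite 2 [h]
      simp
    have h3 : v = 0 := by
      rcases smul_eq_zero.mp h2 with h' | h'
      · norm_num at h'
      · exact h'
    exact h0 (h3 ▸ hv)
  have hidx : ∀ v ∈ V, L.idxOf v ≠ L.idxOf (-v) := by
    intro v hv h
    exact hvne v hv ((List.idxOf_inj ((hmemL v).mpr hv)).mp h)
  have hcover : ∀ v ∈ V, v ∈ s ∨ -v ∈ s := by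
    intro v hv
    rcases lt_or_gt_of_ne (hidx v hv) with h | h
    · exact Or.inl (Finset.mem_filter.mpr ⟨hv, h⟩)
    · right
      refine Finset.mem_filter.mpr ⟨hnegmem v hv, ?_⟩
      rwa [neg_neg]
  have hsineq : ∀ v ∈ s, -v ∉ s := by
    intro v hv hnv
    obtain ⟨hvV, h1⟩ := Finset.mem_filter.mp hv
    obtain ⟨_, h2⟩ := Finset.mem_filter.mp hnv
    rw [neg_neg] at h2
    omega
  have hssub : s ⊆ V := Finset.filter_subset _ _
  -- s has cardinality n
  have htcard : s.card = n := by
    have h1 : (V.filter (fun v => ¬ L.idxOf v < L.idxOf (-v))) = s.image (fun v => -v) := by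
      ext x
      constructor
      · intro hx
        obtain ⟨hxV, hx2⟩ := Finset.mem_filter.mp hx
        refine Finset.mem_image.mpr ⟨-x, ?_, neg_neg x⟩
        refine Finset.mem_filter.mpr ⟨hnegmem x hxV, ?_⟩
        rw [neg_neg]
        exact lt_of_le_of_ne (not_lt.mp hx2) (Ne.symm (hidx x hxV))
      · intro hx
        obtain ⟨y, hy, rfl⟩ := Finset.mem_image.mp hx
        obtain ⟨hyV, hy2⟩ := Finset.mem_filter.mp hy
        refine Finset.mem_filter.mpr ⟨hnegmem y hyV, ?_⟩
        rw [neg_neg]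
        omega
    have h2 := Finset.card_filter_add_card_filter_not
      (s := V) (p := fun v => L.idxOf v < L.idxOf (-v))
    have h3 : (s.image (fun v => -v)).card = s.card :=
      Finset.card_image_of_injective _ neg_injective
    rw [h1, h3, ← hs, hcard] at h2
    omega
  -- elements of s are pairwise orthogonal
  have hsorth : ∀ u ∈ s, ∀ v ∈ s, u ≠ v → ⟪u, v⟫ = 0 := by
    intro u hu v hv huv
    rcases hrel' u (hssub hu) v (hssub hv) huv with h | h
    · exact h
    · exact absurd (h ▸ hv) (hsineq u hu)
  haveI : Nonempty (Fin n) := ⟨⟨0, by omega⟩⟩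
  set eqv := Finset.equivFinOfCardEq htcard with heqv
  set e : Fin n → EuclideanSpace ℝ (Fin n) :=
    fun i => ((eqv.symm i : s) : EuclideanSpace ℝ (Fin n)) with he
  have hemem : ∀ i, e i ∈ s := fun i => (eqv.symm i).2
  have heinj : Function.Injective e := fun i j h => eqv.symm.injective (Subtype.ext h)
  have hon : Orthonormal ℝ e := by
    rw [orthonormal_iff_ite]
    intro i j
    by_cases hij : i = j
    · subst hij
      rw [if_pos rfl, real_inner_self_eq_norm_sq, hnorm (e i) (hssub (hemem i))]
      norm_num
    · rw [if_neg hij]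
      exact hsorth (e i) (hemem i) (e j) (hemem j) (fun h => hij (heinj h))
  have hcardfin : Fintype.card (Fin n) = finrank ℝ (EuclideanSpace ℝ (Fin n)) := by
    rw [Fintype.card_fin, hrankE]
  set bas := basisOfLinearIndependentOfCardEqFinrank hon.linearIndependent hcardfin with hbasdef
  have hbas : ⇑bas = e := coe_basisOfLinearIndependentOfCardEqFinrank _ _
  have honb : Orthonormal ℝ ⇑bas := by rw [hbas]; exact hon
  refine ⟨bas.toOrthonormalBasis honb, ?_⟩
  have hb : ∀ i, (bas.toOrthonormalBasis honb) i = e i := by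
    intro i
    rw [Basis.coe_toOrthonormalBasis, hbas]
  have hex : ∀ (x : EuclideanSpace ℝ (Fin n)) (hx : x ∈ s), e (eqv ⟨x, hx⟩) = x := by
    intro x hx
    rw [he]
    simp
  ext x
  simp only [Set.mem_union, Set.mem_range, Finset.mem_coe]
  constructor
  · intro hx
    rcases hcover x hx with h | h
    · exact Or.inl ⟨eqv ⟨x, h⟩, by rw [hb, hex x h]⟩
    · exact Or.inr ⟨eqv ⟨-x, h⟩, by rw [hb, hex (-x) h, neg_neg]⟩
  · intro hx
    rcases hx with ⟨i, hi⟩ | ⟨i, hi⟩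
    · rw [hb] at hi
      exact hi ▸ hssub (hemem i)
    · rw [hb] at hi
      have h2 := hnegmem _ (hssub (hemem i))
      rwa [hi] at h2
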